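/- Compression of a multiple almost-Riordan array: if (b | g; f₁, …, f_ℓ) has entries d_{n,k} and compressed entries d̂_{n,k} := d_{ℓn−(ℓ−1)k, k}, then d̂_{n,0} = [t^n] b̂(t), and for k ≥ 1 with k ≡ m (mod ℓ), 1 ≤ m ≤ ℓ, d̂_{n,k} = [t^n] t·ĝ·f̂₁⋯f̂_{m−1}·(f̂₁f̂₂⋯f̂_ℓ)^{(k−m)/ℓ}, where b̂(t) = Σ b_{ℓk} t^k, ĝ(t) = Σ g_{ℓk} t^k, and f̂_j(t) = Σ f_{j,ℓk+1} t^{k+1} are the compressed series. -/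

import Mathlib

open PowerSeries

/-- `g ∈ K[[t^ℓ]]`. -/
def InTl {K : Type*} [Field K] (ℓ : ℕ) (g : PowerSeries K) : Prop :=
  ∀ n : ℕ, ¬ ℓ ∣ n → coeff n g = 0

/-- A multiplier function: `f ∈ t·K[[t^ℓ]]` with `f'(0) ≠ 0`. -/
def IsMult {K : Type*} [Field K] (ℓ : ℕ) (f : PowerSeries K) : Prop :=
  constantCoeff f = 0 ∧ (∀ n : ℕ, n % ℓ ≠ 1 % ℓ → coeff n f = 0) ∧ coeff 1 f ≠ 0

/-- Column generating functions `(b, tg, tgf₁, tgf₁f₂, …)` of the multiple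
almost-Riordan array `(b | g; f₁, …, f_ℓ)`; the entry `d_{n,k}` of the array
is `coeff n (maCol ℓ b g f k)`. -/
noncomputable def maCol {K : Type*} [Field K] (ℓ : ℕ) (b g : PowerSeries K)
    (f : ℕ → PowerSeries K) : ℕ → PowerSeries K
  | 0 => b
  | k + 1 => X * g * ∏ j ∈ Finset.range ℓ, f j ^ ((k + ℓ - 1 - j) / ℓ)

/-- The compressed series `b̂(t) = Σ_k b_{ℓk} t^k` of `b ∈ K[[t^ℓ]]`. -/
noncomputable def hatSeries {K : Type*} [Field K] (ℓ : ℕ) (b : PowerSeries K) :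
    PowerSeries K :=
  PowerSeries.mk fun n => coeff (ℓ * n) b

/-- The compressed multiplier `f̂_j(t) = Σ_k f_{j,ℓk+1} t^{k+1}`. -/
noncomputable def hatMult {K : Type*} [Field K] (ℓ : ℕ) (f : PowerSeries K) :
    PowerSeries K :=
  PowerSeries.mk fun n => match n with
    | 0 => 0
    | k + 1 => coeff (ℓ * k + 1) f

section Aux

variable {K : Type*} [Field K]

/-- Support of `A` is contained in `w + ℓℕ`. -/
def HWt (ℓ w : ℕ) (A : PowerSeries K) : Prop :=
  ∀ d : ℕ, coeff d A ≠ 0 → ∃ s, d = w + ℓ * s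

/-- Compression of a series of weight `w`. -/
noncomputable def hatW (ℓ w : ℕ) (A : PowerSeries K) : PowerSeries K :=
  PowerSeries.mk fun n => if w ≤ n then coeff (w + ℓ * (n - w)) A else 0

lemma HWt.coeff_eq_zero {ℓ w : ℕ} {A : PowerSeries K} (hA : HWt ℓ w A) {d : ℕ}
    (hd : d < w) : coeff d A = 0 := by
  by_contra h
  obtain ⟨s, rfl⟩ := hA d h
  omega

lemma HWt.mul {ℓ w v : ℕ} {A B : PowerSeries K} (hA : HWt ℓ w A) (hB : HWt ℓ v B) :
    HWt ℓ (w + v) (A * B) := by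
  intro d hd
  rw [coeff_mul] at hd
  obtain ⟨p, hp, hne⟩ := Finset.exists_ne_zero_of_sum_ne_zero hd
  have h1 : coeff p.1 A ≠ 0 := fun h => hne (by rw [h, zero_mul])
  have h2 : coeff p.2 B ≠ 0 := fun h => hne (by rw [h, mul_zero])
  obtain ⟨s, hs⟩ := hA p.1 h1
  obtain ⟨t, ht⟩ := hB p.2 h2
  have hpd : p.1 + p.2 = d := Finset.HasAntidiagonal.mem_antidiagonal.mp hp
  refine ⟨s + t, ?_⟩
  rw [mul_add]
  omega

lemma HWt.one (ℓ : ℕ) : HWt ℓ 0 (1 : PowerSeries K) := by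
  intro d hd
  refine ⟨0, ?_⟩
  by_contra h
  exact hd (by rw [coeff_one, if_neg (by omega)])

lemma hatW_one (ℓ : ℕ) (hℓ : 1 ≤ ℓ) : hatW ℓ 0 (1 : PowerSeries K) = 1 := by
  ext n
  simp only [hatW, coeff_mk, Nat.zero_le, if_pos, Nat.sub_zero, coeff_one]
  have h : ℓ * n = 0 ↔ n = 0 := by
    constructor
    · intro h
      rcases Nat.mul_eq_zero.mp h with h | h <;> omega
    · intro h; simp [h]
  by_cases hn : n = 0 <;> simp [hn, h]

lemma hatW_mul {ℓ : ℕ} (hℓ : 1 ≤ ℓ) {w v : ℕ} {A B : PowerSeries K}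
    (hA : HWt ℓ w A) (hB : HWt ℓ v B) :
    hatW ℓ (w + v) (A * B) = hatW ℓ w A * hatW ℓ v B := by
  ext n
  rw [coeff_mul, Finset.Nat.sum_antidiagonal_eq_sum_range_succ_mk]
  simp only [hatW, coeff_mk]
  by_cases hn : w + v ≤ n
  · rw [if_pos hn, coeff_mul, Finset.Nat.sum_antidiagonal_eq_sum_range_succ_mk]
    set n' := n - (w + v) with hn'def
    set N := w + v + ℓ * n' with hNdef
    have hL : ∑ a ∈ Finset.range (N + 1),
        coeff a A * coeff (N - a) B
        = ∑ s ∈ Finset.range (n' + 1),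
            coeff (w + ℓ * s) A * coeff (v + ℓ * (n' - s)) B := by
      have hinj : ∀ x ∈ Finset.range (n' + 1), ∀ y ∈ Finset.range (n' + 1),
          w + ℓ * x = w + ℓ * y → x = y := by
        intro x _ y _ h
        exact Nat.eq_of_mul_eq_mul_left hℓ (by omega : ℓ * x = ℓ * y)
      have hsub : (Finset.range (n' + 1)).image (fun s => w + ℓ * s)
          ⊆ Finset.range (N + 1) := by
        intro a ha
        simp only [Finset.mem_image, Finset.mem_range] at ha
        obtain ⟨s, hs, rfl⟩ := ha
        have h1 : ℓ * s ≤ ℓ * n' := Nat.mul_le_mul_left ℓ (by omega)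
        simp only [Finset.mem_range]
        omega
      have hvan : ∀ a ∈ Finset.range (N + 1),
          a ∉ (Finset.range (n' + 1)).image (fun s => w + ℓ * s) →
          coeff a A * coeff (N - a) B = 0 := by
        intro a ha hna
        simp only [Finset.mem_range] at ha
        simp only [Finset.mem_image, Finset.mem_range, not_exists, not_and] at hna
        by_cases h1 : coeff a A = 0
        · rw [h1, zero_mul]
        by_cases h2 : coeff (N - a) B = 0
        · rw [h2, mul_zero]
        exfalso
        obtain ⟨s, hs⟩ := hA a h1
        obtain ⟨t, ht⟩ := hB (N - a) h2
        have hst : ℓ * s + ℓ * t = ℓ * n' := by omega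
        have hstn : s + t = n' := Nat.eq_of_mul_eq_mul_left hℓ
          (by rw [mul_add]; exact hst)
        exact hna s (by omega) hs.symm
      calc ∑ a ∈ Finset.range (N + 1),
              coeff a A * coeff (N - a) B
          = ∑ a ∈ (Finset.range (n' + 1)).image (fun s => w + ℓ * s),
              coeff a A * coeff (N - a) B :=
            (Finset.sum_subset hsub hvan).symm
        _ = ∑ s ∈ Finset.range (n' + 1),
              coeff (w + ℓ * s) A * coeff (N - (w + ℓ * s)) B :=
            Finset.sum_image hinj
        _ = ∑ s ∈ Finset.range (n' + 1),
              coeff (w + ℓ * s) A * coeff (v + ℓ * (n' - s)) B := by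
            refine Finset.sum_congr rfl fun s hs => ?_
            have hs' : s ≤ n' := by
              simpa [Nat.lt_succ_iff] using Finset.mem_range.mp hs
            have h1 : ℓ * s + ℓ * (n' - s) = ℓ * n' := by
              rw [← mul_add, Nat.add_sub_cancel' hs']
            rw [show N - (w + ℓ * s) = v + ℓ * (n' - s) by omega]
    have hR : ∑ p ∈ Finset.range (n + 1),
          ((if w ≤ p then coeff (w + ℓ * (p - w)) A else 0) *
           (if v ≤ n - p then coeff (v + ℓ * (n - p - v)) B else 0))
        = ∑ s ∈ Finset.range (n' + 1),
            coeff (w + ℓ * s) A * coeff (v + ℓ * (n' - s)) B := by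
      have hinj : ∀ x ∈ Finset.range (n' + 1), ∀ y ∈ Finset.range (n' + 1),
          w + x = w + y → x = y := by intro x _ y _ h; omega
      have hsub : (Finset.range (n' + 1)).image (fun s => w + s)
          ⊆ Finset.range (n + 1) := by
        intro a ha
        simp only [Finset.mem_image, Finset.mem_range] at ha
        obtain ⟨s, hs, rfl⟩ := ha
        simp only [Finset.mem_range]
        omega
      have hvan : ∀ p ∈ Finset.range (n + 1),
          p ∉ (Finset.range (n' + 1)).image (fun s => w + s) →
          ((if w ≤ p then coeff (w + ℓ * (p - w)) A else 0) *
           (if v ≤ n - p then coeff (v + ℓ * (n - p - v)) B else 0)) = 0 := by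
        intro p hp hnp
        simp only [Finset.mem_range] at hp
        simp only [Finset.mem_image, Finset.mem_range, not_exists, not_and] at hnp
        by_cases h1 : w ≤ p
        · by_cases h2 : v ≤ n - p
          · exact absurd (show w + (p - w) = p by omega) (hnp (p - w) (by omega))
          · rw [if_neg h2, mul_zero]
        · rw [if_neg h1, zero_mul]
      calc ∑ p ∈ Finset.range (n + 1),
              ((if w ≤ p then coeff (w + ℓ * (p - w)) A else 0) *
               (if v ≤ n - p then coeff (v + ℓ * (n - p - v)) B else 0))
          = ∑ p ∈ (Finset.range (n' + 1)).image (fun s => w + s),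
              ((if w ≤ p then coeff (w + ℓ * (p - w)) A else 0) *
               (if v ≤ n - p then coeff (v + ℓ * (n - p - v)) B else 0)) :=
            (Finset.sum_subset hsub hvan).symm
        _ = ∑ s ∈ Finset.range (n' + 1),
              ((if w ≤ w + s then coeff (w + ℓ * ((w + s) - w)) A else 0) *
               (if v ≤ n - (w + s) then coeff (v + ℓ * ((n - (w + s)) - v)) B else 0)) :=
            Finset.sum_image hinj
        _ = ∑ s ∈ Finset.range (n' + 1),
              coeff (w + ℓ * s) A * coeff (v + ℓ * (n' - s)) B := by
            refine Finset.sum_congr rfl fun s hs => ?_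
            have hs' : s ≤ n' := by
              simpa [Nat.lt_succ_iff] using Finset.mem_range.mp hs
            rw [if_pos (by omega : w ≤ w + s), if_pos (by omega : v ≤ n - (w + s)),
              show w + s - w = s by omega, show n - (w + s) - v = n' - s by omega]
    rw [hL, hR]
  · rw [if_neg hn]
    symm
    apply Finset.sum_eq_zero
    intro p hp
    simp only [Finset.mem_range] at hp
    by_cases h1 : w ≤ p
    · rw [if_neg (by omega : ¬ v ≤ n - p), mul_zero]
    · rw [if_neg h1, zero_mul]

lemma HWt.pow {ℓ w : ℕ} {A : PowerSeries K} (hA : HWt ℓ w A) (e : ℕ) :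
    HWt ℓ (e * w) (A ^ e) := by
  induction e with
  | zero => simpa using HWt.one ℓ
  | succ e ih =>
    have h := ih.mul hA
    rw [← pow_succ] at h
    have hw : e * w + w = (e + 1) * w := by ring
    rwa [hw] at h

lemma hatW_pow {ℓ : ℕ} (hℓ : 1 ≤ ℓ) {w : ℕ} {A : PowerSeries K} (hA : HWt ℓ w A)
    (e : ℕ) : hatW ℓ (e * w) (A ^ e) = (hatW ℓ w A) ^ e := by
  induction e with
  | zero => simpa using hatW_one ℓ hℓ
  | succ e ih =>
    have h := hatW_mul hℓ (hA.pow e) hA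
    rw [← pow_succ] at h
    rw [show (e + 1) * w = e * w + w by ring, h, ih, pow_succ]

lemma HWt.prodRange {ℓ : ℕ} (t : ℕ) (w : ℕ → ℕ) (A : ℕ → PowerSeries K)
    (h : ∀ j < t, HWt ℓ (w j) (A j)) :
    HWt ℓ (∑ j ∈ Finset.range t, w j) (∏ j ∈ Finset.range t, A j) := by
  induction t with
  | zero => simpa using HWt.one ℓ
  | succ t ih =>
    rw [Finset.prod_range_succ, Finset.sum_range_succ]
    exact (ih fun j hj => h j (by omega)).mul (h t (by omega))

lemma hatW_prodRange {ℓ : ℕ} (hℓ : 1 ≤ ℓ) (t : ℕ) (w : ℕ → ℕ) (A : ℕ → PowerSeries K)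
    (h : ∀ j < t, HWt ℓ (w j) (A j)) :
    hatW ℓ (∑ j ∈ Finset.range t, w j) (∏ j ∈ Finset.range t, A j)
      = ∏ j ∈ Finset.range t, hatW ℓ (w j) (A j) := by
  induction t with
  | zero => simpa using hatW_one ℓ hℓ
  | succ t ih =>
    rw [Finset.prod_range_succ, Finset.sum_range_succ, Finset.prod_range_succ,
      hatW_mul hℓ (HWt.prodRange t w A fun j hj => h j (by omega)) (h t (by omega)),
      ih fun j hj => h j (by omega)]

end Aux

/-- Compression of a multiple almost-Riordan array `(b | g; f₁, …, f_ℓ)`: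
with `d̂_{n,k} = d_{ℓn−(ℓ−1)k, k}`, one has `d̂_{n,0} = [tⁿ] b̂` and, for
`k ≥ 1` with `k ≡ m (mod ℓ)`, `1 ≤ m ≤ ℓ`,
`d̂_{n,k} = [tⁿ] t·ĝ·f̂₁⋯f̂_{m−1}·(f̂₁f̂₂⋯f̂_ℓ)^{(k−m)/ℓ}`. -/
theorem multiple_almost_riordan_compression {K : Type*} [Field K] [CharZero K]
    (ℓ : ℕ) (hℓ : 1 ≤ ℓ)
    (b g : PowerSeries K) (f : ℕ → PowerSeries K)
    (hb : InTl ℓ b) (hb0 : constantCoeff b ≠ 0)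
    (hg : InTl ℓ g) (hg0 : constantCoeff g ≠ 0)
    (hf : ∀ j < ℓ, IsMult ℓ (f j)) :
    (∀ n : ℕ, coeff (ℓ * n - (ℓ - 1) * 0) (maCol ℓ b g f 0) =
      coeff n (hatSeries ℓ b)) ∧
    (∀ n k m : ℕ, 1 ≤ m → m ≤ ℓ → k % ℓ = m % ℓ → 1 ≤ k →
      coeff (ℓ * n - (ℓ - 1) * k) (maCol ℓ b g f k) =
        coeff n (X * hatSeries ℓ g *
          (∏ j ∈ Finset.range (m - 1), hatMult ℓ (f j)) *
          (∏ j ∈ Finset.range ℓ, hatMult ℓ (f j)) ^ ((k - m) / ℓ))) := by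
  have hℓ0 : 0 < ℓ := hℓ
  have hwg : HWt ℓ 0 g := by
    intro d hd
    by_contra h
    push_neg at h
    exact hd (hg d (fun ⟨s, hs⟩ => h s (by omega)))
  have hwX : HWt ℓ 1 (X : PowerSeries K) := by
    intro d hd
    rw [coeff_X] at hd
    refine ⟨0, ?_⟩
    by_contra h
    exact hd (if_neg (by omega))
  have hwf : ∀ j < ℓ, HWt ℓ 1 (f j) := by
    intro j hj d hd
    obtain ⟨h0, h1, _⟩ := hf j hj
    have hd1 : 1 ≤ d := by
      rcases Nat.eq_zero_or_pos d with h | h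
      · exfalso; apply hd; rw [h, coeff_zero_eq_constantCoeff, h0]
      · exact h
    have hmod : d % ℓ = 1 % ℓ := by
      by_contra hc
      exact hd (h1 d hc)
    obtain ⟨s, hs⟩ := (Nat.modEq_iff_dvd' hd1).mp hmod.symm
    exact ⟨s, by omega⟩
  have hatg : hatW ℓ 0 g = hatSeries ℓ g := by
    ext n
    simp [hatW, hatSeries, coeff_mk]
  have hatX : hatW ℓ 1 (X : PowerSeries K) = X := by
    ext n
    cases n with
    | zero => simp [hatW, coeff_mk]
    | succ s =>
      simp only [hatW, coeff_mk, Nat.le_add_left, if_pos, Nat.add_sub_cancel,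
        Nat.succ_sub_one, coeff_X]
      by_cases hs : s = 0
      · subst hs; simp
      · have h1 : ℓ ≤ ℓ * s := Nat.le_mul_of_pos_right ℓ (by omega)
        rw [if_neg (by omega), if_neg (by omega)]
  have hatf : ∀ j, hatW ℓ 1 (f j) = hatMult ℓ (f j) := by
    intro j
    ext n
    cases n with
    | zero => simp [hatW, hatMult, coeff_mk]
    | succ s =>
      simp only [hatW, hatMult, coeff_mk, Nat.le_add_left, if_pos, Nat.add_sub_cancel,
        Nat.succ_sub_one]
      rw [add_comm]
  constructor
  · intro n
    simp only [Nat.mul_zero, Nat.sub_zero, maCol, hatSeries, coeff_mk]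
  · intro n k m hm1 hmℓ hkm hk1
    have hmk : m ≤ k := by
      have h1 : k % ℓ ≤ k := Nat.mod_le k ℓ
      by_cases hmeq : m = ℓ
      · have h0 : k % ℓ = 0 := by rw [hkm, hmeq, Nat.mod_self]
        rcases Nat.dvd_of_mod_eq_zero h0 with ⟨c, rfl⟩
        rcases Nat.eq_zero_or_pos c with rfl | h
        · simp at hk1
        · rw [hmeq]
          calc ℓ = ℓ * 1 := by ring
            _ ≤ ℓ * c := Nat.mul_le_mul_left ℓ h
      · have : m % ℓ = m := Nat.mod_eq_of_lt (by omega)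
        omega
    obtain ⟨q, hq⟩ := (Nat.modEq_iff_dvd' hmk).mp hkm.symm
    have hqdef : (k - m) / ℓ = q := by rw [hq, Nat.mul_div_cancel_left q hℓ0]
    have hk : k = m + ℓ * q := by omega
    obtain ⟨k', rfl⟩ : ∃ k', k = k' + 1 := ⟨k - 1, by omega⟩
    set e : ℕ → ℕ := fun j => (k' + ℓ - 1 - j) / ℓ with he_def
    have he : ∀ j < ℓ, e j = q + (if j < m - 1 then 1 else 0) := by
      intro j hj
      show (k' + ℓ - 1 - j) / ℓ = q + (if j < m - 1 then 1 else 0)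
      rw [show k' + ℓ - 1 - j = (m + ℓ - 2 - j) + ℓ * q by omega,
        Nat.add_mul_div_left _ _ hℓ0]
      by_cases hjm : j < m - 1
      · rw [if_pos hjm, show m + ℓ - 2 - j = (m - 2 - j) + ℓ by omega,
          Nat.add_div_right _ hℓ0, Nat.div_eq_of_lt (by omega)]
        omega
      · rw [if_neg hjm, Nat.div_eq_of_lt (by omega)]
        omega
    have hsum_ite : (∑ j ∈ Finset.range ℓ, if j < m - 1 then (1 : ℕ) else 0) = m - 1 := by
      calc (∑ j ∈ Finset.range ℓ, if j < m - 1 then (1 : ℕ) else 0)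
          = ∑ j ∈ Finset.range (m - 1), if j < m - 1 then (1 : ℕ) else 0 :=
            (Finset.sum_subset (Finset.range_subset_range.mpr (by omega))
              (fun x _ hx => if_neg (by simpa [Finset.mem_range] using hx))).symm
        _ = ∑ _j ∈ Finset.range (m - 1), 1 :=
            Finset.sum_congr rfl fun x hx => if_pos (Finset.mem_range.mp hx)
        _ = m - 1 := by simp
    have hsum : ∑ j ∈ Finset.range ℓ, e j = k' := by
      rw [Finset.sum_congr rfl (fun j hj => he j (Finset.mem_range.mp hj)),
        Finset.sum_add_distrib, hsum_ite, Finset.sum_const, Finset.card_range,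
        smul_eq_mul]
      omega
    have hsum1 : ∑ j ∈ Finset.range ℓ, e j * 1 = k' := by
      simpa using hsum
    have hwP : ∀ j < ℓ, HWt ℓ (e j * 1) ((f j) ^ (e j)) :=
      fun j hj => (hwf j hj).pow (e j)
    have hwProd : HWt ℓ (∑ j ∈ Finset.range ℓ, e j * 1)
        (∏ j ∈ Finset.range ℓ, (f j) ^ (e j)) :=
      HWt.prodRange ℓ _ _ hwP
    have hwCol : HWt ℓ (k' + 1) (maCol ℓ b g f (k' + 1)) := by
      have h2 := (hwX.mul hwg).mul hwProd
      rw [hsum1, show (1 + 0 + k' : ℕ) = k' + 1 by omega] at h2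
      exact h2
    have h4 : ∀ j < ℓ, hatW ℓ (e j * 1) ((f j) ^ (e j)) = (hatMult ℓ (f j)) ^ (e j) := by
      intro j hj
      rw [hatW_pow hℓ (hwf j hj) (e j), hatf j]
    have hatCol : hatW ℓ (k' + 1) (maCol ℓ b g f (k' + 1)) =
        X * hatSeries ℓ g * ∏ j ∈ Finset.range ℓ, (hatMult ℓ (f j)) ^ (e j) := by
      have h2 := hatW_mul hℓ (hwX.mul hwg) hwProd
      rw [hatW_prodRange hℓ ℓ _ _ hwP,
        hatW_mul hℓ hwX hwg, hatX, hatg,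
        Finset.prod_congr rfl (fun j hj => h4 j (Finset.mem_range.mp hj))] at h2
      rw [hsum1, show (1 + 0 + k' : ℕ) = k' + 1 by omega] at h2
      exact h2
    have hsplit : (∏ j ∈ Finset.range ℓ, (hatMult ℓ (f j)) ^ (e j)) =
        (∏ j ∈ Finset.range (m - 1), hatMult ℓ (f j)) *
        (∏ j ∈ Finset.range ℓ, hatMult ℓ (f j)) ^ q := by
      calc ∏ j ∈ Finset.range ℓ, (hatMult ℓ (f j)) ^ (e j)
          = ∏ j ∈ Finset.range ℓ,
              ((hatMult ℓ (f j)) ^ q * (hatMult ℓ (f j)) ^ (if j < m - 1 then 1 else 0)) :=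
            Finset.prod_congr rfl fun j hj => by
              rw [← pow_add, he j (Finset.mem_range.mp hj)]
        _ = (∏ j ∈ Finset.range ℓ, (hatMult ℓ (f j)) ^ q) *
            (∏ j ∈ Finset.range ℓ, (hatMult ℓ (f j)) ^ (if j < m - 1 then 1 else 0)) :=
            Finset.prod_mul_distrib
        _ = (∏ j ∈ Finset.range (m - 1), hatMult ℓ (f j)) *
            (∏ j ∈ Finset.range ℓ, hatMult ℓ (f j)) ^ q := by
            rw [Finset.prod_pow, mul_comm]
            congr 1
            calc ∏ j ∈ Finset.range ℓ, (hatMult ℓ (f j)) ^ (if j < m - 1 then 1 else 0)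
                = ∏ j ∈ Finset.range (m - 1),
                    (hatMult ℓ (f j)) ^ (if j < m - 1 then 1 else 0) :=
                  (Finset.prod_subset (Finset.range_subset_range.mpr (by omega))
                    (fun x _ hx => by
                      rw [if_neg (by simpa [Finset.mem_range] using hx), pow_zero])).symm
              _ = ∏ j ∈ Finset.range (m - 1), hatMult ℓ (f j) :=
                  Finset.prod_congr rfl fun x hx => by
                    rw [if_pos (Finset.mem_range.mp hx), pow_one]
    rw [hqdef]
    have hRHS : X * hatSeries ℓ g * (∏ j ∈ Finset.range (m - 1), hatMult ℓ (f j)) *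
        (∏ j ∈ Finset.range ℓ, hatMult ℓ (f j)) ^ q
        = hatW ℓ (k' + 1) (maCol ℓ b g f (k' + 1)) := by
      rw [hatCol, hsplit, mul_assoc]
    rw [hRHS]
    simp only [hatW, coeff_mk]
    by_cases hnk : k' + 1 ≤ n
    · rw [if_pos hnk]
      have f1 : ℓ * (n - (k' + 1)) + ℓ * (k' + 1) = ℓ * n := by
        rw [← mul_add]
        congr 1
        omega
      have f2 : (ℓ - 1) * (k' + 1) = ℓ * (k' + 1) - (k' + 1) := Nat.sub_one_mul ℓ (k' + 1)
      have f3 : k' + 1 ≤ ℓ * (k' + 1) := Nat.le_mul_of_pos_left _ hℓ0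
      rw [show ℓ * n - (ℓ - 1) * (k' + 1) = k' + 1 + ℓ * (n - (k' + 1)) by omega]
    · rw [if_neg hnk]
      apply hwCol.coeff_eq_zero
      have f1 : ℓ * n ≤ ℓ * k' := Nat.mul_le_mul_left ℓ (by omega)
      have f2 : ℓ * k' + ℓ = ℓ * (k' + 1) := by ring
      have f3 : (ℓ - 1) * (k' + 1) = ℓ * (k' + 1) - (k' + 1) := Nat.sub_one_mul ℓ (k' + 1)
      have f4 : k' + 1 ≤ ℓ * (k' + 1) := Nat.le_mul_of_pos_left _ hℓ0
      omega
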